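/- Let μ be a shift-invariant probability measure on A* and x ∈ A^ω satisfy aligned normality for μ: for every ℓ and every w ∈ A^ℓ, lim_{n→∞} alocc(x[1..nℓ], w)/n = μ(w). Then the shifted sequence σ(x) also satisfies aligned normality for μ. -/

import Mathlib

set_option linter.unusedSectionVars false
set_option linter.unusedTactic false
set_option linter.deprecated false
set_option maxHeartbeats 1000000


open Filter

/-- Number of aligned occurrences of `u` in `w` (positions `i ≡ 1 (mod |u|)`),
positions numbered from 1. -/
def alocc {A : Type*} [DecidableEq A] (w u : List A) : ℕ :=
  ((Finset.Icc 1 (w.length + 1 - u.length)).filter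
    (fun i => (w.drop (i - 1)).take u.length = u ∧ i % u.length = 1 % u.length)).card

/-- Prefix `x[1..n]` of an infinite sequence. -/
def wordPrefix {A : Type*} (x : ℕ → A) (n : ℕ) : List A := (List.range n).map x

/-- Aligned normality of `x` with respect to the measure `μ`. -/
def AlignedNormal {A : Type*} [DecidableEq A] (μ : List A → ℝ) (x : ℕ → A) : Prop :=
  ∀ ℓ : ℕ, 1 ≤ ℓ → ∀ w : Fin ℓ → A,
    Tendsto (fun n : ℕ => (alocc (wordPrefix x (n * ℓ)) (List.ofFn w) : ℝ) / n)
      atTop (nhds (μ (List.ofFn w)))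

namespace AlignedAux
variable {A : Type*} [DecidableEq A]

def win (x : ℕ → A) (s L : ℕ) : List A := List.ofFn (fun i : Fin L => x (s + i))

@[simp] lemma win_length (x : ℕ → A) (s L : ℕ) : (win x s L).length = L := by simp [win]

lemma win_drop_take (x : ℕ → A) (s p ℓ B : ℕ) (h : p + ℓ ≤ B) :
    ((win x s B).drop p).take ℓ = win x (s + p) ℓ := by
  apply List.ext_getElem
  · simp [win]; omega
  · intro i h1 h2
    simp only [List.getElem_take, List.getElem_drop, win, List.getElem_ofFn]
    congr 1; omega

lemma wordPrefix_drop_take (x : ℕ → A) (s ℓ N : ℕ) (h : s + ℓ ≤ N) :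
    ((wordPrefix x N).drop s).take ℓ = win x s ℓ := by
  apply List.ext_getElem
  · simp [win, wordPrefix]; omega
  · intro i h1 h2
    simp only [List.getElem_take, List.getElem_drop, win, List.getElem_ofFn,
      wordPrefix, List.getElem_map, List.getElem_range]

end AlignedAux

namespace AlignedAux2
open AlignedAux
variable {A : Type*} [DecidableEq A]

lemma length_wordPrefix (x : ℕ → A) (n : ℕ) : (wordPrefix x n).length = n := by
  simp [wordPrefix]

lemma alocc_eq (x : ℕ → A) {ℓ : ℕ} (hℓ : 1 ≤ ℓ) (n : ℕ) (w : List A) (hw : w.length = ℓ) :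
    alocc (wordPrefix x (n * ℓ)) w
      = ∑ j ∈ Finset.range n, if win x (j * ℓ) ℓ = w then 1 else 0 := by
  rw [← Finset.card_filter]
  unfold alocc
  rw [length_wordPrefix, hw]
  apply Finset.card_bij' (i := fun i (_ : i ∈ _) => (i - 1) / ℓ)
    (j := fun j (_ : j ∈ _) => j * ℓ + 1)
  · -- hi : maps into range-filter
    intro i hi
    simp only [Finset.mem_filter, Finset.mem_Icc] at hi
    obtain ⟨⟨hi1, hi2⟩, hcond, hmod⟩ := hi
    have hdvd : ℓ ∣ i - 1 := (Nat.modEq_iff_dvd' hi1).mp (hmod.symm)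
    obtain ⟨j, hj⟩ := hdvd
    have hje : (i - 1) / ℓ = j := by
      rw [hj, Nat.mul_div_cancel_left _ (by omega : 0 < ℓ)]
    have hj' : i - 1 = j * ℓ := by rw [hj, mul_comm]
    have hlt : j < n := by
      by_contra hc
      push_neg at hc
      have := mul_le_mul_left hc ℓ
      omega
    simp only [Finset.mem_filter, Finset.mem_range, hje]
    refine ⟨hlt, ?_⟩
    have heq : j * ℓ = i - 1 := hj'.symm
    rw [heq, ← wordPrefix_drop_take x (i-1) ℓ (n*ℓ) (by omega)]
    exact hcond
  · -- hj : maps into Icc-filter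
    intro j hj
    simp only [Finset.mem_filter, Finset.mem_range] at hj
    obtain ⟨hjn, hcond⟩ := hj
    have h2 : j * ℓ + ℓ ≤ n * ℓ := by
      have := mul_le_mul_left (show j+1 ≤ n by omega) ℓ
      rw [add_mul, one_mul] at this; exact this
    simp only [Finset.mem_filter, Finset.mem_Icc]
    refine ⟨⟨by omega, by omega⟩, ?_, ?_⟩
    · have h3 : j * ℓ + 1 - 1 = j * ℓ := by omega
      rw [h3, wordPrefix_drop_take x (j*ℓ) ℓ (n*ℓ) (by omega)]
      exact hcond
    · rw [add_comm, Nat.add_mul_mod_self_right]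
  · -- left inverse
    intro i hi
    simp only [Finset.mem_filter, Finset.mem_Icc] at hi
    obtain ⟨⟨hi1, hi2⟩, hcond, hmod⟩ := hi
    have hdvd : ℓ ∣ i - 1 := (Nat.modEq_iff_dvd' hi1).mp (hmod.symm)
    obtain ⟨j, hj⟩ := hdvd
    have hje : (i - 1) / ℓ = j := by
      rw [hj, Nat.mul_div_cancel_left _ (by omega : 0 < ℓ)]
    have hj' : i - 1 = j * ℓ := by rw [hj, mul_comm]
    rw [hje]; omega
  · -- right inverse
    intro j hj
    simp only [Nat.add_sub_cancel, Nat.mul_div_cancel _ (by omega : 0 < ℓ)]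

end AlignedAux2

namespace AlignedAux3
open AlignedAux
variable {A : Type*} [Fintype A] [DecidableEq A]

lemma sum_mu_prepend (μ : List A → ℝ) (hinv : ∀ w, ∑ a : A, μ (a :: w) = μ w) :
    ∀ (k : ℕ) (w : List A), ∑ v : Fin k → A, μ (List.ofFn v ++ w) = μ w := by
  intro k
  induction k with
  | zero => intro w; simp
  | succ k ih =>
    intro w
    rw [Fintype.sum_equiv (Fin.consEquiv (fun _ : Fin (k+1) => A)).symm
      (fun v => μ (List.ofFn v ++ w))
      (fun p => μ (p.1 :: (List.ofFn (fun i : Fin k => p.2 i) ++ w)))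
      (by intro v; simp [List.ofFn_succ, Fin.tail])]
    rw [Fintype.sum_prod_type]
    rw [Finset.sum_comm]
    calc (∑ v : Fin k → A, ∑ a : A, μ (a :: (List.ofFn v ++ w)))
        = ∑ v : Fin k → A, μ (List.ofFn v ++ w) := by
          apply Finset.sum_congr rfl; intro v _; exact hinv _
      _ = μ w := ih w

lemma sum_mu_append (μ : List A → ℝ) (hext : ∀ w, ∑ a : A, μ (w ++ [a]) = μ w) :
    ∀ (k : ℕ) (w : List A), ∑ v : Fin k → A, μ (w ++ List.ofFn v) = μ w := by
  intro k
  induction k with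
  | zero => intro w; simp
  | succ k ih =>
    intro w
    rw [Fintype.sum_equiv (Fin.consEquiv (fun _ : Fin (k+1) => A)).symm
      (fun v => μ (w ++ List.ofFn v))
      (fun p => μ ((w ++ [p.1]) ++ List.ofFn (fun i : Fin k => p.2 i)))
      (by intro v; simp [List.ofFn_succ, Fin.tail])]
    rw [Fintype.sum_prod_type]
    calc (∑ a : A, ∑ v : Fin k → A, μ ((w ++ [a]) ++ List.ofFn v))
        = ∑ a : A, μ (w ++ [a]) := by
          apply Finset.sum_congr rfl; intro a _; exact ih _
      _ = μ w := hext w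

lemma sum_ind_ofFn (v : List A) (p : ℕ) (hv : v.length = p) :
    ∑ f : Fin p → A, (if List.ofFn f = v then (1:ℝ) else 0) = 1 := by
  have hg : List.ofFn (fun i : Fin p => v.get (Fin.cast hv.symm i)) = v := by
    apply List.ext_getElem
    · simp [hv]
    · intro i h1 h2; simp
  have : ∀ f : Fin p → A, (List.ofFn f = v) ↔ f = fun i => v.get (Fin.cast hv.symm i) := by
    intro f
    constructor
    · intro h; exact List.ofFn_injective (by rw [h, hg])
    · intro h; rw [h, hg]
  simp_rw [this]
  simp

lemma ind_decomp (a W : List A) (p ℓ q : ℕ) (hW : W.length = ℓ)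
    (ha : a.length = p + ℓ + q) :
    (∑ f : Fin p → A, ∑ b : Fin q → A,
      (if a = List.ofFn f ++ (W ++ List.ofFn b) then (1:ℝ) else 0))
      = if (a.drop p).take ℓ = W then 1 else 0 := by
  have key : ∀ (f : Fin p → A) (b : Fin q → A),
      (a = List.ofFn f ++ (W ++ List.ofFn b)) ↔
      (((a.drop p).take ℓ = W) ∧ (List.ofFn f = a.take p) ∧ (List.ofFn b = a.drop (p + ℓ))) := by
    intro f b
    constructor
    · intro h
      have h1 : a.take p = List.ofFn f := by
        rw [h, List.take_left' (by simp)]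
      have h2 : a.drop p = W ++ List.ofFn b := by
        rw [h, List.drop_left' (by simp)]
      refine ⟨?_, h1.symm, ?_⟩
      · rw [h2, List.take_left' hW]
      · rw [← List.drop_drop, h2, List.drop_left' hW]
    · rintro ⟨h1, h2, h3⟩
      have : a = a.take p ++ ((a.drop p).take ℓ ++ a.drop (p + ℓ)) := by
        rw [← List.drop_drop, List.take_append_drop, List.take_append_drop]
      rw [this, h1, ← h2, ← h3]
  simp_rw [key]
  have hite : ∀ (P Q R : Prop) [Decidable P] [Decidable Q] [Decidable R],
      (if P ∧ Q ∧ R then (1:ℝ) else 0)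
        = (if P then (1:ℝ) else 0) * ((if Q then (1:ℝ) else 0) * (if R then (1:ℝ) else 0)) := by
    intro P Q R _ _ _
    split_ifs <;> simp_all
  simp_rw [hite, ← mul_assoc, ← Finset.mul_sum]
  have hb : ∑ b : Fin q → A, (if List.ofFn b = a.drop (p+ℓ) then (1:ℝ) else 0) = 1 :=
    sum_ind_ofFn _ _ (by rw [List.length_drop]; omega)
  simp_rw [hb, mul_one]
  rw [← Finset.mul_sum]
  have hf : ∑ f : Fin p → A, (if List.ofFn f = a.take p then (1:ℝ) else 0) = 1 :=
    sum_ind_ofFn _ _ (by rw [List.length_take]; omega)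
  rw [hf, mul_one]

end AlignedAux3

namespace AlignedMain
open AlignedAux AlignedAux2 AlignedAux3

variable {A : Type*} [Fintype A] [DecidableEq A]

lemma sum_range_mul (f : ℕ → ℝ) (q m : ℕ) :
    ∑ j ∈ Finset.range (q * m), f j
      = ∑ k ∈ Finset.range q, ∑ s ∈ Finset.range m, f (k * m + s) := by
  induction q with
  | zero => simp
  | succ q ih =>
    rw [Finset.sum_range_succ, ← ih, add_mul, one_mul, Finset.sum_range_add]

lemma cnt_tendsto (μ : List A → ℝ) (x : ℕ → A) (hx : AlignedNormal μ x)
    {L : ℕ} (hL : 1 ≤ L) (u : List A) (hu : u.length = L) :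
    Tendsto (fun n : ℕ =>
        (∑ k ∈ Finset.range n, if win x (k * L) L = u then (1:ℝ) else 0) / n)
      atTop (nhds (μ u)) := by
  have hofn : List.ofFn (fun i : Fin L => u.get (Fin.cast hu.symm i)) = u := by
    apply List.ext_getElem
    · simp [hu]
    · intro i h1 h2; simp
  have h := hx L hL (fun i : Fin L => u.get (Fin.cast hu.symm i))
  rw [hofn] at h
  have heq : ∀ n : ℕ, ((alocc (wordPrefix x (n * L)) u : ℕ) : ℝ)
      = ∑ k ∈ Finset.range n, if win x (k * L) L = u then (1:ℝ) else 0 := by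
    intro n
    rw [alocc_eq x hL n u hu]
    push_cast
    rfl
  simp only [heq] at h
  exact h

theorem key_bounds (μ : List A → ℝ)
    (hext : ∀ w, ∑ a : A, μ (w ++ [a]) = μ w)
    (hinv : ∀ w, ∑ a : A, μ (a :: w) = μ w)
    (x : ℕ → A) (hx : AlignedNormal μ x)
    {ℓ : ℕ} (hℓ : 1 ≤ ℓ) (W : List A) (hW : W.length = ℓ) (m : ℕ) :
    ((m:ℝ) * μ W / (m+1)) ≤
      liminf (fun n : ℕ =>
        (∑ j ∈ Finset.range n, if win x (j * ℓ + 1) ℓ = W then (1:ℝ) else 0) / n) atTop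
    ∧ limsup (fun n : ℕ =>
        (∑ j ∈ Finset.range n, if win x (j * ℓ + 1) ℓ = W then (1:ℝ) else 0) / n) atTop
      ≤ ((m:ℝ) * μ W + 1) / (m+1) := by
  set c := μ W with hc
  set N : ℕ → ℝ := fun n => ∑ j ∈ Finset.range n,
    if win x (j * ℓ + 1) ℓ = W then (1:ℝ) else 0 with hNdef
  have hN0 : ∀ n, 0 ≤ N n := by
    intro n; apply Finset.sum_nonneg; intro j _; split <;> norm_num
  have hNmono : Monotone N := by
    intro n n' h
    apply Finset.sum_le_sum_of_subset_of_nonneg (Finset.range_subset_range.2 h)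
    intro j _ _; split <;> norm_num
  have hNle : ∀ n : ℕ, N n ≤ n := by
    intro n
    calc N n ≤ ∑ _j ∈ Finset.range n, (1:ℝ) := by
          apply Finset.sum_le_sum; intro j _; split <;> norm_num
      _ = n := by simp
  set B := (m+1) * ℓ with hB
  have hB1 : 1 ≤ B := by
    have : 1 * 1 ≤ (m+1) * ℓ := Nat.mul_le_mul (by omega) hℓ
    omega
  set S : ℕ → ℝ := fun q => ∑ s ∈ Finset.range m, ∑ k ∈ Finset.range q,
      (if win x (k * B + (s * ℓ + 1)) ℓ = W then (1:ℝ) else 0) with hSdef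
  have hS0 : ∀ q, 0 ≤ S q := by
    intro q; apply Finset.sum_nonneg; intro s _
    apply Finset.sum_nonneg; intro k _; split <;> norm_num
  -- (a) S q / q → m * c
  have hStend : Tendsto (fun q : ℕ => S q / q) atTop (nhds ((m:ℝ) * c)) := by
    have hrw : ∀ q : ℕ, S q / q = ∑ s ∈ Finset.range m,
        ((∑ k ∈ Finset.range q, if win x (k*B + (s*ℓ+1)) ℓ = W then (1:ℝ) else 0) / q) := by
      intro q; rw [hSdef, Finset.sum_div]
    simp only [hrw]
    have hmc : (m:ℝ) * c = ∑ _s ∈ Finset.range m, c := by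
      simp [mul_comm]
    rw [hmc]
    apply tendsto_finset_sum
    intro s hs
    have hsm : s < m := Finset.mem_range.mp hs
    set p := s * ℓ + 1 with hp
    have hpl : p + ℓ ≤ B := by
      have h1 : (s+1) * ℓ ≤ m * ℓ := mul_le_mul_left (by omega) ℓ
      have h2 : (m+1) * ℓ = m * ℓ + ℓ := by ring
      rw [add_mul, one_mul] at h1
      omega
    have hind : ∀ k : ℕ, (if win x (k*B + p) ℓ = W then (1:ℝ) else 0)
        = ∑ f : Fin p → A, ∑ b : Fin (B - (p+ℓ)) → A,
            (if win x (k*B) B = List.ofFn f ++ (W ++ List.ofFn b) then (1:ℝ) else 0) := by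
      intro k
      have e1 : ((win x (k*B) B).drop p).take ℓ = win x (k*B + p) ℓ :=
        win_drop_take x (k*B) p ℓ B hpl
      rw [← e1]
      exact (ind_decomp (win x (k*B) B) W p ℓ (B - (p+ℓ)) hW
        (by rw [win_length]; omega)).symm
    have hswap : ∀ q : ℕ, (∑ k ∈ Finset.range q, if win x (k*B+p) ℓ = W then (1:ℝ) else 0)
        = ∑ f : Fin p → A, ∑ b : Fin (B-(p+ℓ)) → A, ∑ k ∈ Finset.range q,
            (if win x (k*B) B = List.ofFn f ++ (W ++ List.ofFn b) then (1:ℝ) else 0) := by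
      intro q
      simp_rw [hind]
      rw [Finset.sum_comm]
      apply Finset.sum_congr rfl; intro f _
      rw [Finset.sum_comm]
    simp only [hswap]
    have hc2 : (c : ℝ) = ∑ f : Fin p → A, ∑ b : Fin (B-(p+ℓ)) → A,
        μ (List.ofFn f ++ (W ++ List.ofFn b)) := by
      have e2 : ∀ (f : Fin p → A), ∑ b : Fin (B-(p+ℓ)) → A,
          μ (List.ofFn f ++ (W ++ List.ofFn b)) = μ (List.ofFn f ++ W) := by
        intro f
        have := sum_mu_append μ hext (B-(p+ℓ)) (List.ofFn f ++ W)
        simp only [List.append_assoc] at this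
        exact this
      simp only [e2]
      exact (sum_mu_prepend μ hinv p W).symm
    rw [hc2]
    have hdivswap : ∀ q : ℕ, (∑ f : Fin p → A, ∑ b : Fin (B-(p+ℓ)) → A, ∑ k ∈ Finset.range q,
          (if win x (k*B) B = List.ofFn f ++ (W ++ List.ofFn b) then (1:ℝ) else 0)) / q
        = ∑ f : Fin p → A, ∑ b : Fin (B-(p+ℓ)) → A, ((∑ k ∈ Finset.range q,
          (if win x (k*B) B = List.ofFn f ++ (W ++ List.ofFn b) then (1:ℝ) else 0)) / q) := by
      intro q
      rw [Finset.sum_div]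
      apply Finset.sum_congr rfl; intro f _
      rw [Finset.sum_div]
    simp only [hdivswap]
    apply tendsto_finset_sum
    intro f _
    apply tendsto_finset_sum
    intro b _
    apply cnt_tendsto μ x hx hB1
    simp only [List.length_append, List.length_ofFn, hW]
    omega
  -- (b) decomposition
  have hNS : ∀ q : ℕ, S q ≤ N (q * (m+1)) ∧ N (q * (m+1)) ≤ S q + q := by
    intro q
    have hsplit : N (q * (m+1)) = ∑ s ∈ Finset.range (m+1), ∑ k ∈ Finset.range q,
        (if win x (k * B + (s*ℓ+1)) ℓ = W then (1:ℝ) else 0) := by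
      rw [hNdef]
      simp only []
      rw [sum_range_mul _ q (m+1), Finset.sum_comm]
      apply Finset.sum_congr rfl; intro s _
      apply Finset.sum_congr rfl; intro k _
      rw [hB, show (k*(m+1)+s)*ℓ+1 = k*((m+1)*ℓ) + (s*ℓ+1) from by ring]
    have hT0 : 0 ≤ ∑ k ∈ Finset.range q,
        (if win x (k * B + (m*ℓ+1)) ℓ = W then (1:ℝ) else 0) := by
      apply Finset.sum_nonneg; intro k _; split <;> norm_num
    have hTq : (∑ k ∈ Finset.range q,
        (if win x (k * B + (m*ℓ+1)) ℓ = W then (1:ℝ) else 0)) ≤ q := by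
      calc (∑ k ∈ Finset.range q, (if win x (k * B + (m*ℓ+1)) ℓ = W then (1:ℝ) else 0))
          ≤ ∑ _k ∈ Finset.range q, (1:ℝ) := by
            apply Finset.sum_le_sum; intro k _; split <;> norm_num
        _ = q := by simp
    rw [hsplit, Finset.sum_range_succ]
    constructor
    · rw [hSdef]; simp only []; linarith
    · rw [hSdef]; simp only []; linarith
  -- divergence of n ↦ n / (m+1)
  have hdiv : Tendsto (fun n : ℕ => n / (m+1)) atTop atTop := by
    apply Filter.tendsto_atTop_atTop.mpr
    intro b
    exact ⟨b * (m+1), fun a ha => (Nat.le_div_iff_mul_le (by omega)).mpr ha⟩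
  constructor
  · -- liminf bound
    have h1 : Tendsto (fun q : ℕ => (q:ℝ)/((q:ℝ)+1)) atTop (nhds 1) :=
      tendsto_natCast_div_add_atTop 1
    have hgt : Tendsto (fun q : ℕ => S q / (((q:ℝ)+1)*((m:ℝ)+1))) atTop
        (nhds ((m:ℝ)*c/((m:ℝ)+1))) := by
      have h2 := hStend.mul (h1.mul
        (tendsto_const_nhds : Tendsto (fun _ : ℕ => (1:ℝ)/((m:ℝ)+1)) atTop _))
      have h3 : (m:ℝ)*c/((m:ℝ)+1) = ((m:ℝ)*c) * (1 * (1/((m:ℝ)+1))) := by ring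
      rw [h3]
      apply h2.congr
      intro q
      rcases Nat.eq_zero_or_pos q with h|h
      · subst h; simp [hSdef]
      · have hq0 : (q:ℝ) ≠ 0 := by positivity
        have hq1 : (q:ℝ)+1 ≠ 0 := by positivity
        have hm1 : (m:ℝ)+1 ≠ 0 := by positivity
        first
        | (field_simp; ring)
        | field_simp
    have hev : ∀ᶠ n : ℕ in atTop,
        S (n/(m+1)) / (((n/(m+1) : ℕ):ℝ)+1) / ((m:ℝ)+1) ≤ N n / n := by
      filter_upwards [eventually_ge_atTop 1] with n hn
      set q := n / (m+1) with hq
      have hq1 : q * (m+1) ≤ n := Nat.div_mul_le_self n (m+1)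
      have hq2 : n < (q+1) * (m+1) := by
        have h1 := Nat.div_add_mod n (m+1)
        rw [← hq] at h1
        have h2 : n % (m+1) < m+1 := Nat.mod_lt n (by omega)
        have h3 : q * (m+1) = (m+1) * q := by ring
        have h4 : (q+1) * (m+1) = q * (m+1) + (m+1) := by ring
        omega
      have hSN : S q ≤ N n := le_trans (hNS q).1 (hNmono hq1)
      have hn0 : (0:ℝ) < n := by
        have : (1:ℝ) ≤ (n:ℝ) := by exact_mod_cast hn
        linarith
      have hcast : (n:ℝ) ≤ ((q:ℝ)+1)*((m:ℝ)+1) := by exact_mod_cast hq2.le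
      have hSq0 : 0 ≤ S q := hS0 q
      calc S q / ((q:ℝ)+1) / ((m:ℝ)+1) = S q / (((q:ℝ)+1)*((m:ℝ)+1)) := by
            rw [div_div]
        _ ≤ S q / n := by gcongr
        _ ≤ N n / n := by gcongr
    have hgt' : Tendsto (fun n : ℕ => S (n/(m+1)) / (((n/(m+1) : ℕ):ℝ)+1) / ((m:ℝ)+1))
        atTop (nhds ((m:ℝ)*c/((m:ℝ)+1))) := by
      have := hgt.comp hdiv
      apply this.congr
      intro n
      simp only [Function.comp]
      rw [div_div]
    have hbg : IsBoundedUnder (· ≥ ·) atTop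
        (fun n : ℕ => S (n/(m+1)) / (((n/(m+1) : ℕ):ℝ)+1) / ((m:ℝ)+1)) :=
      hgt'.isBoundedUnder_ge
    have hcb : IsCoboundedUnder (· ≥ ·) atTop (fun n : ℕ => N n / n) := by
      apply IsBoundedUnder.isCoboundedUnder_ge
      apply isBoundedUnder_of
      refine ⟨1, fun n => ?_⟩
      rcases Nat.eq_zero_or_pos n with h|h
      · subst h; simp [hNdef]
      · have hn0 : (0:ℝ) < n := by exact_mod_cast h
        rw [div_le_one hn0]; exact hNle n
    calc (m:ℝ)*c/((m:ℝ)+1)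
        = liminf (fun n : ℕ => S (n/(m+1)) / (((n/(m+1) : ℕ):ℝ)+1) / ((m:ℝ)+1)) atTop :=
          (hgt'.liminf_eq).symm
      _ ≤ liminf (fun n : ℕ => N n / n) atTop := liminf_le_liminf hev hbg hcb
  · -- limsup bound
    have h1 : Tendsto (fun q : ℕ => S (q+1) / ((q:ℝ)+1)) atTop (nhds ((m:ℝ)*c)) := by
      have h0 := hStend.comp (tendsto_add_atTop_nat 1)
      apply h0.congr
      intro q
      simp only [Function.comp]
      push_cast
      rfl
    have h2 : Tendsto (fun q : ℕ => ((q:ℝ)+1)/(q:ℝ)) atTop (nhds 1) := by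
      have h3 : Tendsto (fun q : ℕ => 1 + 1/(q:ℝ)) atTop (nhds (1+0)) :=
        tendsto_const_nhds.add tendsto_one_div_atTop_nhds_zero_nat
      rw [add_zero] at h3
      apply h3.congr'
      filter_upwards [eventually_ge_atTop 1] with q hq
      have hq0 : (q:ℝ) ≠ 0 := by
        have : (1:ℝ) ≤ (q:ℝ) := by exact_mod_cast hq
        linarith
      field_simp
    have hgt : Tendsto (fun q : ℕ => (S (q+1) + ((q:ℝ)+1)) / ((q:ℝ)*((m:ℝ)+1)))
        atTop (nhds (((m:ℝ)*c+1)/((m:ℝ)+1))) := by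
      have h4 := ((h1.add (tendsto_const_nhds :
          Tendsto (fun _ : ℕ => (1:ℝ)) atTop _)).mul h2).mul
        (tendsto_const_nhds : Tendsto (fun _ : ℕ => (1:ℝ)/((m:ℝ)+1)) atTop _)
      have h5 : (((m:ℝ)*c+1)/((m:ℝ)+1)) = (((m:ℝ)*c + 1) * 1) * (1/((m:ℝ)+1)) := by ring
      rw [h5]
      apply h4.congr'
      filter_upwards [eventually_ge_atTop 1] with q hq
      have hq0 : (q:ℝ) ≠ 0 := by
        have : (1:ℝ) ≤ (q:ℝ) := by exact_mod_cast hq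
        linarith
      have hq1 : (q:ℝ)+1 ≠ 0 := by positivity
      have hm1 : (m:ℝ)+1 ≠ 0 := by positivity
      first
      | (field_simp; ring)
      | field_simp
    have hgt' : Tendsto (fun n : ℕ =>
        (S (n/(m+1)+1) + (((n/(m+1) : ℕ):ℝ)+1)) / (((n/(m+1) : ℕ):ℝ)*((m:ℝ)+1)))
        atTop (nhds (((m:ℝ)*c+1)/((m:ℝ)+1))) := hgt.comp hdiv
    have hev : ∀ᶠ n : ℕ in atTop, N n / n ≤
        (S (n/(m+1)+1) + (((n/(m+1) : ℕ):ℝ)+1)) / (((n/(m+1) : ℕ):ℝ)*((m:ℝ)+1)) := by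
      filter_upwards [eventually_ge_atTop (m+1)] with n hn
      set q := n / (m+1) with hq
      have hq0 : 1 ≤ q := by
        rw [hq]; exact (Nat.le_div_iff_mul_le (by omega)).mpr (by omega)
      have hq1 : q * (m+1) ≤ n := Nat.div_mul_le_self n (m+1)
      have hq2 : n < (q+1) * (m+1) := by
        have h1 := Nat.div_add_mod n (m+1)
        rw [← hq] at h1
        have h2 : n % (m+1) < m+1 := Nat.mod_lt n (by omega)
        have h3 : q * (m+1) = (m+1) * q := by ring
        have h4 : (q+1) * (m+1) = q * (m+1) + (m+1) := by ring
        omega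
      have hNup : N n ≤ S (q+1) + ((q:ℝ)+1) := by
        have h6 := (hNS (q+1)).2
        have h7 : N n ≤ N ((q+1)*(m+1)) := hNmono hq2.le
        push_cast at h6
        linarith
      have hn0 : (0:ℝ) < n := by
        have : ((m+1:ℕ):ℝ) ≤ (n:ℝ) := by exact_mod_cast hn
        push_cast at this
        linarith
      have hqm0 : (0:ℝ) < (q:ℝ)*((m:ℝ)+1) := by
        have : (1:ℝ) ≤ (q:ℝ) := by exact_mod_cast hq0
        positivity
      have hcast : (q:ℝ)*((m:ℝ)+1) ≤ (n:ℝ) := by exact_mod_cast hq1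
      have hnum0 : 0 ≤ S (q+1) + ((q:ℝ)+1) := by
        have := hS0 (q+1); positivity
      calc N n / n ≤ (S (q+1) + ((q:ℝ)+1)) / n := by gcongr
        _ ≤ (S (q+1) + ((q:ℝ)+1)) / ((q:ℝ)*((m:ℝ)+1)) := by gcongr
    have hbg : IsBoundedUnder (· ≤ ·) atTop (fun n : ℕ =>
        (S (n/(m+1)+1) + (((n/(m+1) : ℕ):ℝ)+1)) / (((n/(m+1) : ℕ):ℝ)*((m:ℝ)+1))) :=
      hgt'.isBoundedUnder_le
    have hcb : IsCoboundedUnder (· ≤ ·) atTop (fun n : ℕ => N n / n) := by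
      apply IsBoundedUnder.isCoboundedUnder_le
      apply isBoundedUnder_of
      exact ⟨0, fun n => div_nonneg (hN0 n) (Nat.cast_nonneg n)⟩
    calc limsup (fun n : ℕ => N n / n) atTop
        ≤ limsup (fun n : ℕ =>
            (S (n/(m+1)+1) + (((n/(m+1) : ℕ):ℝ)+1)) / (((n/(m+1) : ℕ):ℝ)*((m:ℝ)+1))) atTop :=
          limsup_le_limsup hev hcb hbg
      _ = ((m:ℝ)*c+1)/((m:ℝ)+1) := hgt'.limsup_eq


theorem main_aux (μ : List A → ℝ)
    (hext : ∀ w, ∑ a : A, μ (w ++ [a]) = μ w)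
    (hinv : ∀ w, ∑ a : A, μ (a :: w) = μ w)
    (x : ℕ → A) (hx : AlignedNormal μ x)
    {ℓ : ℕ} (hℓ : 1 ≤ ℓ) (W : List A) (hW : W.length = ℓ) :
    Tendsto (fun n : ℕ =>
        (∑ j ∈ Finset.range n, if win x (j * ℓ + 1) ℓ = W then (1:ℝ) else 0) / n)
      atTop (nhds (μ W)) := by
  set c := μ W with hc
  have hN0 : ∀ n : ℕ, (0:ℝ) ≤ ∑ j ∈ Finset.range n,
      (if win x (j * ℓ + 1) ℓ = W then (1:ℝ) else 0) := by
    intro n; apply Finset.sum_nonneg; intro j _; split <;> norm_num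
  have hNle : ∀ n : ℕ, (∑ j ∈ Finset.range n,
      (if win x (j * ℓ + 1) ℓ = W then (1:ℝ) else 0)) ≤ n := by
    intro n
    calc (∑ j ∈ Finset.range n, (if win x (j * ℓ + 1) ℓ = W then (1:ℝ) else 0))
        ≤ ∑ _j ∈ Finset.range n, (1:ℝ) := by
          apply Finset.sum_le_sum; intro j _; split <;> norm_num
      _ = n := by simp
  have hbdd1 : IsBoundedUnder (· ≤ ·) atTop (fun n : ℕ =>
      (∑ j ∈ Finset.range n, if win x (j * ℓ + 1) ℓ = W then (1:ℝ) else 0) / n) := by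
    apply isBoundedUnder_of
    refine ⟨1, fun n => ?_⟩
    rcases Nat.eq_zero_or_pos n with h|h
    · subst h; simp
    · have hn0 : (0:ℝ) < n := by exact_mod_cast h
      rw [div_le_one hn0]; exact hNle n
  have hbdd2 : IsBoundedUnder (· ≥ ·) atTop (fun n : ℕ =>
      (∑ j ∈ Finset.range n, if win x (j * ℓ + 1) ℓ = W then (1:ℝ) else 0) / n) := by
    apply isBoundedUnder_of
    exact ⟨0, fun n => div_nonneg (hN0 n) (Nat.cast_nonneg n)⟩
  have h1 : Tendsto (fun m : ℕ => (m:ℝ)/((m:ℝ)+1)) atTop (nhds 1) :=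
    tendsto_natCast_div_add_atTop 1
  apply tendsto_of_le_liminf_of_limsup_le ?_ ?_ hbdd1 hbdd2
  · have ht : Tendsto (fun m : ℕ => (m:ℝ)*c/((m:ℝ)+1)) atTop (nhds c) := by
      have h2 := h1.mul (tendsto_const_nhds : Tendsto (fun _ : ℕ => c) atTop _)
      rw [one_mul] at h2
      apply h2.congr; intro m; ring
    apply le_of_tendsto ht
    exact Eventually.of_forall fun m => (key_bounds μ hext hinv x hx hℓ W hW m).1
  · have ht : Tendsto (fun m : ℕ => ((m:ℝ)*c+1)/((m:ℝ)+1)) atTop (nhds c) := by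
      have h3 : Tendsto (fun m : ℕ => (1:ℝ)/((m:ℝ)+1)) atTop (nhds 0) :=
        tendsto_one_div_add_atTop_nhds_zero_nat
      have h2 := (h1.mul (tendsto_const_nhds : Tendsto (fun _ : ℕ => c) atTop _)).add h3
      rw [one_mul, add_zero] at h2
      apply h2.congr; intro m; ring
    apply ge_of_tendsto ht
    exact Eventually.of_forall fun m => (key_bounds μ hext hinv x hx hℓ W hW m).2

end AlignedMain

/-- If `x` is aligned normal for a shift-invariant probability measure `μ`, then so is
the shifted sequence `σ(x)`. -/
theorem alignedNormal_shift {A : Type*} [Fintype A] [DecidableEq A]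
    (μ : List A → ℝ)
    (hrange : ∀ w, 0 ≤ μ w ∧ μ w ≤ 1)
    (hnil : μ [] = 1)
    (hext : ∀ w, ∑ a : A, μ (w ++ [a]) = μ w)
    (hinv : ∀ w, ∑ a : A, μ (a :: w) = μ w)
    (x : ℕ → A) (hx : AlignedNormal μ x) :
    AlignedNormal μ (fun n => x (n + 1)) := by
  intro ℓ hℓ w
  have hW : (List.ofFn w).length = ℓ := by simp
  have hmain := AlignedMain.main_aux μ hext hinv x hx hℓ (List.ofFn w) hW
  apply hmain.congr
  intro n
  congr 1
  have h1 := AlignedAux2.alocc_eq (fun k => x (k+1)) hℓ n (List.ofFn w) hW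
  rw [h1]
  push_cast
  apply Finset.sum_congr rfl
  intro j _
  have h2 : AlignedAux.win (fun k => x (k+1)) (j * ℓ) ℓ = AlignedAux.win x (j * ℓ + 1) ℓ := by
    unfold AlignedAux.win
    apply List.ext_getElem
    · simp
    · intro i hi1 hi2
      simp only [List.getElem_ofFn]
      congr 1
      omega
  rw [h2]
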